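/- Let c > 0 and let r: [0, T) → (0, ∞) be differentiable with r'(t) = -K(t)·sinh(r(t)) where |K(t)| ≤ c for all t. Then, writing c₀ = tanh(r(0)/2) ∈ (0,1), for all t ∈ [0, T) one has r(t) ≥ ln((1 + c₀ e^{-ct})/(1 - c₀ e^{-ct})) > 0. In particular r(t) is bounded below by a positive constant on any finite time interval. -/

import Mathlib

open Real Set

/-- Lower-bound estimate along the hyperbolic combinatorial Ricci flow
`r' = -K sinh r` with `|K| ≤ c`: writing `c₀ = tanh (r 0 / 2) ∈ (0,1)`, one has
`r t ≥ ln ((1 + c₀ e^{-ct}) / (1 - c₀ e^{-ct})) > 0` on `[0, T)`. -/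
theorem ricci_flow_radius_lower_bound (T c : ℝ) (hT : 0 < T) (hc : 0 < c)
    (r K : ℝ → ℝ)
    (hpos : ∀ t ∈ Ico (0:ℝ) T, 0 < r t)
    (hderiv : ∀ t ∈ Ico (0:ℝ) T, HasDerivAt r (-(K t) * Real.sinh (r t)) t)
    (hK : ∀ t ∈ Ico (0:ℝ) T, |K t| ≤ c) :
    Real.tanh (r 0 / 2) ∈ Ioo (0:ℝ) 1 ∧
    ∀ t ∈ Ico (0:ℝ) T,
      0 < Real.log ((1 + Real.tanh (r 0 / 2) * Real.exp (-c * t)) /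
            (1 - Real.tanh (r 0 / 2) * Real.exp (-c * t))) ∧
      Real.log ((1 + Real.tanh (r 0 / 2) * Real.exp (-c * t)) /
            (1 - Real.tanh (r 0 / 2) * Real.exp (-c * t))) ≤ r t := by
  have h0mem : (0:ℝ) ∈ Ico (0:ℝ) T := ⟨le_refl _, hT⟩
  -- basic facts about tanh
  have htanh_pos : ∀ x : ℝ, 0 < x → 0 < Real.tanh x := fun x hx => by
    rw [Real.tanh_eq_sinh_div_cosh]
    exact div_pos (Real.sinh_pos_iff.mpr hx) (Real.cosh_pos x)
  have htanh_lt_one : ∀ x : ℝ, Real.tanh x < 1 := fun x => by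
    rw [Real.tanh_eq_sinh_div_cosh]
    rw [div_lt_one (Real.cosh_pos x)]
    nlinarith [Real.cosh_sub_sinh x, Real.exp_pos (-x)]
  have hr0 : 0 < r 0 := hpos 0 h0mem
  have hc0 : Real.tanh (r 0 / 2) ∈ Ioo (0:ℝ) 1 :=
    ⟨htanh_pos _ (by linarith), htanh_lt_one _⟩
  refine ⟨hc0, fun t ht => ?_⟩
  set c₀ := Real.tanh (r 0 / 2) with hc₀def
  set a := c₀ * Real.exp (-c * t) with hadef
  have hexp1 : Real.exp (-c * t) ≤ 1 := by
    apply Real.exp_le_one_iff.mpr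
    nlinarith [ht.1]
  have ha_pos : 0 < a := mul_pos hc0.1 (Real.exp_pos _)
  have ha_lt1 : a < 1 := by
    calc a ≤ c₀ * 1 := by
          apply mul_le_mul_of_nonneg_left hexp1 (le_of_lt hc0.1)
      _ < 1 := by rw [mul_one]; exact hc0.2
  constructor
  · apply Real.log_pos
    rw [lt_div_iff₀ (by linarith)]
    linarith
  · -- main comparison. Define g t = log sinh (r t/2) - log cosh (r t/2) + c*t
    set g : ℝ → ℝ := fun s => Real.log (Real.sinh (r s / 2)) - Real.log (Real.cosh (r s / 2)) + c * s with hgdef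
    have hgderiv : ∀ s ∈ Ico (0:ℝ) T, HasDerivAt g (-(K s) + c) s := by
      intro s hs
      have hrs : 0 < r s := hpos s hs
      have hsh : 0 < Real.sinh (r s / 2) := Real.sinh_pos_iff.mpr (by linarith)
      have hch : 0 < Real.cosh (r s / 2) := Real.cosh_pos _
      have hhalf : HasDerivAt (fun u => r u / 2) (-(K s) * Real.sinh (r s) / 2) s :=
        (hderiv s hs).div_const 2
      have h1 : HasDerivAt (fun u => Real.sinh (r u / 2))
          (Real.cosh (r s / 2) * (-(K s) * Real.sinh (r s) / 2)) s :=
        (Real.hasDerivAt_sinh _).comp s hhalf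
      have h2 : HasDerivAt (fun u => Real.cosh (r u / 2))
          (Real.sinh (r s / 2) * (-(K s) * Real.sinh (r s) / 2)) s :=
        (Real.hasDerivAt_cosh _).comp s hhalf
      have h3 := (h1.log (ne_of_gt hsh)).sub (h2.log (ne_of_gt hch))
      have h4 : HasDerivAt g
          (Real.cosh (r s / 2) * (-(K s) * Real.sinh (r s) / 2) / Real.sinh (r s / 2)
            - Real.sinh (r s / 2) * (-(K s) * Real.sinh (r s) / 2) / Real.cosh (r s / 2) + c) s := by
        exact (h3.add ((hasDerivAt_id s).const_mul c)).congr_deriv (by ring)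
      convert h4 using 1
      have hsinh2 : Real.sinh (r s) = 2 * Real.sinh (r s / 2) * Real.cosh (r s / 2) := by
        have h := Real.sinh_two_mul (r s / 2)
        rwa [show 2 * (r s / 2) = r s by ring] at h
      have hq := Real.cosh_sq_sub_sinh_sq (r s / 2)
      rw [hsinh2]
      field_simp
      linear_combination (K s) * hq
    have hmono : MonotoneOn g (Ico (0:ℝ) T) := by
      apply monotoneOn_of_deriv_nonneg (convex_Ico 0 T)
      · intro s hs
        exact ((hgderiv s hs).continuousAt).continuousWithinAt
      · intro s hs
        rw [interior_Ico] at hs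
        exact ((hgderiv s ⟨le_of_lt hs.1, hs.2⟩).differentiableAt).differentiableWithinAt
      · intro s hs
        rw [interior_Ico] at hs
        have hs' : s ∈ Ico (0:ℝ) T := ⟨le_of_lt hs.1, hs.2⟩
        rw [(hgderiv s hs').deriv]
        have := hK s hs'
        have := abs_le.mp this
        linarith [this.1]
    have hg0t : g 0 ≤ g t := hmono h0mem ht ht.1
    -- unpack: log(c₀) ≤ log(tanh(r t/2)) + c*t
    have hrt : 0 < r t := hpos t ht
    have hsh0 : 0 < Real.sinh (r 0 / 2) := Real.sinh_pos_iff.mpr (by linarith)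
    have hsht : 0 < Real.sinh (r t / 2) := Real.sinh_pos_iff.mpr (by linarith)
    have hch0 : 0 < Real.cosh (r 0 / 2) := Real.cosh_pos _
    have hcht : 0 < Real.cosh (r t / 2) := Real.cosh_pos _
    set b := Real.tanh (r t / 2) with hbdef
    have hb_pos : 0 < b := htanh_pos _ (by linarith)
    have hb_lt1 : b < 1 := htanh_lt_one _
    have hglog : ∀ s, 0 < r s → Real.log (Real.sinh (r s / 2)) - Real.log (Real.cosh (r s / 2))
        = Real.log (Real.tanh (r s / 2)) := by
      intro s hrs
      rw [Real.tanh_eq_sinh_div_cosh,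
        Real.log_div (ne_of_gt (Real.sinh_pos_iff.mpr (by linarith))) (ne_of_gt (Real.cosh_pos _))]
    have hkey : a ≤ b := by
      have e0 : g 0 = Real.log c₀ := by
        simp only [hgdef, mul_zero, add_zero]
        exact hglog 0 hr0
      have et : g t = Real.log b + c * t := by
        simp only [hgdef]
        rw [hglog t hrt]
      rw [e0, et] at hg0t
      have : Real.log c₀ + (-c * t) ≤ Real.log b := by linarith
      have := Real.exp_le_exp.mpr this
      rwa [Real.exp_add, Real.exp_log hc0.1, Real.exp_log hb_pos] at this
    -- r t = log ((1+b)/(1-b))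
    have hrteq : r t = Real.log ((1 + b) / (1 - b)) := by
      have h1 : 1 + b = Real.exp (r t / 2) / Real.cosh (r t / 2) := by
        rw [hbdef, Real.tanh_eq_sinh_div_cosh, ← Real.cosh_add_sinh]
        field_simp
      have h2 : 1 - b = Real.exp (-(r t / 2)) / Real.cosh (r t / 2) := by
        rw [hbdef, Real.tanh_eq_sinh_div_cosh, ← Real.cosh_sub_sinh]
        field_simp
      have h3 : (1 + b) / (1 - b) = Real.exp (r t) := by
        rw [h1, h2, div_div_div_comm, div_self (ne_of_gt hcht), ← Real.exp_sub]
        rw [show r t / 2 - -(r t / 2) = r t by ring, div_one]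
      rw [h3, Real.log_exp]
    rw [hrteq]
    apply Real.log_le_log (div_pos (by linarith) (by linarith))
    rw [div_le_div_iff₀ (by linarith) (by linarith)]
    nlinarith
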